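/- Define P_{k+1,i} = ((ÃP_{k,i}Ãᵀ + d_i ∑_{j∈N_i} G̃P_{k,j}G̃ᵀ + Q_i)⁻¹ + CᵀR_i⁻¹C)⁻¹ with initial condition P_{0,i} = 0 for all i. Then the sequence (P_{k,i})_{k≥0} is monotonically nondecreasing in k for every i, i.e., P_{k,i} ≤ P_{k+1,i} in the Loewner order for all k. -/

import Mathlib

open Matrix
open scoped BigOperators

section Aux

variable {n : ℕ}

private lemma psd_smul' {c : ℝ} (hc : 0 ≤ c) {A : Matrix (Fin n) (Fin n) ℝ}
    (hA : A.PosSemidef) : (c • A).PosSemidef := by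
  constructor
  · unfold Matrix.IsHermitian
    rw [conjTranspose_smul, hA.1.eq]
    simp [star_trivial]
  · intro x
    have := hA.2 x
    exact (hA.smul hc).2 x

private lemma psd_sum' {ι : Type*} (s : Finset ι) (f : ι → Matrix (Fin n) (Fin n) ℝ)
    (h : ∀ j ∈ s, (f j).PosSemidef) : (∑ j ∈ s, f j).PosSemidef :=
  Finset.sum_induction f _ (fun _ _ ha hb => ha.add hb) Matrix.PosSemidef.zero h

private lemma psd_conjT {A : Matrix (Fin n) (Fin n) ℝ} (hA : A.PosSemidef)
    (B : Matrix (Fin n) (Fin n) ℝ) : (B * A * Bᵀ).PosSemidef := by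
  have := hA.mul_mul_conjTranspose_same B
  simpa [conjTranspose_eq_transpose_of_trivial] using this

private lemma psd_conjT' {m : ℕ} {A : Matrix (Fin m) (Fin m) ℝ} (hA : A.PosSemidef)
    (B : Matrix (Fin m) (Fin n) ℝ) : (Bᵀ * A * B).PosSemidef := by
  have := hA.conjTranspose_mul_mul_same B
  simpa [conjTranspose_eq_transpose_of_trivial] using this

private lemma inv_antitone' {X Y : Matrix (Fin n) (Fin n) ℝ} (hX : X.PosDef) (hY : Y.PosDef)
    (h : (Y - X).PosSemidef) : (X⁻¹ - Y⁻¹).PosSemidef := by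
  have hXd : IsUnit X.det := hX.det_pos.ne'.isUnit
  have hYd : IsUnit Y.det := hY.det_pos.ne'.isUnit
  set D := Y - X with hD
  have hDsymm : Dᵀ = D := by
    have := h.1
    simpa [conjTranspose_eq_transpose_of_trivial, Matrix.IsHermitian, star_trivial] using this
  have hYinv : (Y⁻¹)ᵀ = Y⁻¹ := by
    have := hY.inv.isHermitian
    simpa [conjTranspose_eq_transpose_of_trivial, Matrix.IsHermitian] using this
  have key : X⁻¹ - Y⁻¹ = Y⁻¹ * D * Y⁻¹ + (Y⁻¹ * D) * X⁻¹ * (Y⁻¹ * D)ᵀ := by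
    rw [transpose_mul, hDsymm, hYinv, hD]
    simp only [Matrix.mul_sub, Matrix.sub_mul, Matrix.mul_assoc,
      Matrix.mul_nonsing_inv_cancel_left _ _ hYd, Matrix.nonsing_inv_mul_cancel_left _ _ hYd,
      Matrix.mul_nonsing_inv_cancel_left _ _ hXd, Matrix.nonsing_inv_mul_cancel_left _ _ hXd,
      Matrix.mul_nonsing_inv _ hYd, Matrix.nonsing_inv_mul _ hYd,
      Matrix.mul_nonsing_inv _ hXd, Matrix.nonsing_inv_mul _ hXd,
      Matrix.mul_one, Matrix.one_mul]
    abel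
  rw [key]
  have h1 : (Y⁻¹ * D * Y⁻¹).PosSemidef := by
    have := psd_conjT h Y⁻¹
    rwa [hYinv] at this
  have h2 : ((Y⁻¹ * D) * X⁻¹ * (Y⁻¹ * D)ᵀ).PosSemidef := psd_conjT hX.inv.posSemidef _
  exact h1.add h2

end Aux

/-- With `P_{0,i} = 0`, the distributed covariance recursion
`P_{k+1,i} = ((ÃP_{k,i}Ãᵀ + d_i ∑_{j∈N_i} G̃P_{k,j}G̃ᵀ + Q_i)⁻¹ + CᵀR_i⁻¹C)⁻¹`
is monotonically nondecreasing in `k` for every node `i`. -/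
theorem distributed_covariance_monotone {n m N : ℕ}
    (At Gt : Matrix (Fin n) (Fin n) ℝ) (C : Matrix (Fin m) (Fin n) ℝ)
    (Q : Fin N → Matrix (Fin n) (Fin n) ℝ) (hQ : ∀ i, (Q i).PosDef)
    (R : Fin N → Matrix (Fin m) (Fin m) ℝ) (hR : ∀ i, (R i).PosDef)
    (Nbr : Fin N → Finset (Fin N))
    (P : ℕ → Fin N → Matrix (Fin n) (Fin n) ℝ)
    (hP0 : ∀ i, P 0 i = 0)
    (hPrec : ∀ k i, P (k + 1) i =
      ((At * P k i * Atᵀ + ((Nbr i).card : ℝ) • ∑ j ∈ Nbr i, Gt * P k j * Gtᵀ + Q i)⁻¹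
        + Cᵀ * (R i)⁻¹ * C)⁻¹) :
    ∀ k i, (P (k + 1) i - P k i).PosSemidef := by
  -- the inner "prediction" matrix
  set S : (Fin N → Matrix (Fin n) (Fin n) ℝ) → Fin N → Matrix (Fin n) (Fin n) ℝ :=
    fun Pk i => At * Pk i * Atᵀ + ((Nbr i).card : ℝ) • ∑ j ∈ Nbr i, Gt * Pk j * Gtᵀ + Q i
    with hS
  have hCRC : ∀ i, (Cᵀ * (R i)⁻¹ * C).PosSemidef := fun i =>
    psd_conjT' (hR i).inv.posSemidef C
  have hSpd : ∀ (Pk : Fin N → Matrix (Fin n) (Fin n) ℝ),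
      (∀ j, (Pk j).PosSemidef) → ∀ i, (S Pk i).PosDef := by
    intro Pk hPk i
    have h1 : (At * Pk i * Atᵀ).PosSemidef := psd_conjT (hPk i) At
    have h2 : (((Nbr i).card : ℝ) • ∑ j ∈ Nbr i, Gt * Pk j * Gtᵀ).PosSemidef :=
      psd_smul' (by positivity)
        (psd_sum' _ _ (fun j _ => psd_conjT (hPk j) Gt))
    exact Matrix.PosDef.posSemidef_add (h1.add h2) (hQ i)
  have hSmono : ∀ (Pk Pk' : Fin N → Matrix (Fin n) (Fin n) ℝ),
      (∀ j, (Pk' j - Pk j).PosSemidef) → ∀ i, (S Pk' i - S Pk i).PosSemidef := by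
    intro Pk Pk' hmono i
    have hdiff : S Pk' i - S Pk i
        = At * (Pk' i - Pk i) * Atᵀ
          + ((Nbr i).card : ℝ) • ∑ j ∈ Nbr i, Gt * (Pk' j - Pk j) * Gtᵀ := by
      simp only [hS, Matrix.mul_sub, Matrix.sub_mul, smul_sub, Finset.sum_sub_distrib]
      abel
    rw [hdiff]
    exact (psd_conjT (hmono i) At).add
      (psd_smul' (by positivity) (psd_sum' _ _ (fun j _ => psd_conjT (hmono j) Gt)))
  -- positive definiteness of each iterate past step 0
  have hstep_pd : ∀ k, (∀ j, (P k j).PosSemidef) → ∀ i, (P (k + 1) i).PosDef := by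
    intro k hk i
    rw [hPrec k i]
    exact ((hSpd _ hk i).inv.add_posSemidef (hCRC i)).inv
  -- monotonicity step
  have hstep_mono : ∀ k, (∀ j, (P k j).PosSemidef) →
      (∀ j, (P (k + 1) j - P k j).PosSemidef) →
      ∀ i, (P (k + 2) i - P (k + 1) i).PosSemidef := by
    intro k hk hmono i
    have hk' : ∀ j, (P (k + 1) j).PosSemidef := fun j => (hstep_pd k hk j).posSemidef
    have hS1 : (S (P k) i).PosDef := hSpd _ hk i
    have hS2 : (S (P (k + 1)) i).PosDef := hSpd _ hk' i
    have hinv : ((S (P k) i)⁻¹ - (S (P (k + 1)) i)⁻¹).PosSemidef :=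
      inv_antitone' hS1 hS2 (hSmono _ _ hmono i)
    have hM1 : ((S (P k) i)⁻¹ + Cᵀ * (R i)⁻¹ * C).PosDef :=
      hS1.inv.add_posSemidef (hCRC i)
    have hM2 : ((S (P (k + 1)) i)⁻¹ + Cᵀ * (R i)⁻¹ * C).PosDef :=
      hS2.inv.add_posSemidef (hCRC i)
    have hMdiff : (((S (P k) i)⁻¹ + Cᵀ * (R i)⁻¹ * C)
        - ((S (P (k + 1)) i)⁻¹ + Cᵀ * (R i)⁻¹ * C)).PosSemidef := by
      have : ((S (P k) i)⁻¹ + Cᵀ * (R i)⁻¹ * C)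
          - ((S (P (k + 1)) i)⁻¹ + Cᵀ * (R i)⁻¹ * C)
          = (S (P k) i)⁻¹ - (S (P (k + 1)) i)⁻¹ := by abel
      rw [this]; exact hinv
    have := inv_antitone' hM2 hM1 hMdiff
    rw [hPrec k i, hPrec (k + 1) i]
    exact this
  -- joint induction
  have main : ∀ k, (∀ i, (P k i).PosSemidef) ∧
      (∀ i, (P (k + 1) i - P k i).PosSemidef) := by
    intro k
    induction k with
    | zero =>
      constructor
      · intro i; rw [hP0 i]; exact Matrix.PosSemidef.zero
      · intro i
        rw [hP0 i, sub_zero]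
        exact (hstep_pd 0 (fun j => by rw [hP0 j]; exact Matrix.PosSemidef.zero) i).posSemidef
    | succ k ih =>
      obtain ⟨hk, hmono⟩ := ih
      have hk' : ∀ i, (P (k + 1) i).PosSemidef := fun i => (hstep_pd k hk i).posSemidef
      exact ⟨hk', hstep_mono k hk hmono⟩
  exact fun k i => (main k).2 i
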